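/- Let α be a limit ordinal and C a category with limits of β-sequences for β ≤ α. The identity morphism on the final-sequence sheaf fseq(F) ∈ Sh_C(α) (given by fseq(F)_β = F^β with the canonical connecting maps) is a coalgebra for the locally contractive endofunctor F^ ∘ ▶ on Sh_C(α), i.e., (F^ ▶ fseq(F))_β = fseq(F)_β at every stage β ≤ α, and it is the unique (up to isomorphism) F^∘▶-invariant: it is both an initial algebra and a final coalgebra for F^ ∘ ▶. -/

import Mathlib

open CategoryTheory CategoryTheory.Limits Opposite

universe w v u

/-- The stages of the Alexandrov topology of the ordinal `α`: the ordinals `≤ α`. -/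
def Stage (α : Ordinal.{w}) : Type (w + 1) :=
  {β : Ordinal.{w} // β ≤ α}

instance (α : Ordinal.{w}) : Preorder (Stage α) :=
  Subtype.preorder _

variable {C : Type u} [Category.{v} C]

/-- The inclusion of the stages strictly below `γ`. -/
def stageIncl {α : Ordinal.{w}} (γ : Stage α) : {t : Stage α // t < γ} ⥤ Stage α :=
  Monotone.functor (f := fun t => t.1) fun _ _ h => h

/-- The canonical cone of a presheaf `X` at stage `γ` over the stages below `γ`. -/
def belowCone {α : Ordinal.{w}} (X : (Stage α)ᵒᵖ ⥤ C) (γ : Stage α) :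
    Cone ((stageIncl γ).op ⋙ X) where
  pt := X.obj (op γ)
  π :=
    { app := fun t => X.map (homOfLE t.unop.2.le).op
      naturality := fun t t' f => by
        dsimp
        erw [Category.id_comp, ← X.map_comp]
        exact congrArg X.map (Subsingleton.elim _ _) }

/-- The sheaf condition for a presheaf on the stages of `α`: at every stage that is
not a successor (i.e. `0` and limit stages) the value is the limit of the values at
the stages below. -/
def SheafCond {α : Ordinal.{w}} (X : (Stage α)ᵒᵖ ⥤ C) : Prop :=
  ∀ γ : Stage α, (¬ ∃ δ : Ordinal.{w}, γ.1 = δ + 1) → Nonempty (IsLimit (belowCone X γ))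

/-- The category `Sh_C(α)` of `C`-valued sheaves on the Alexandrov topology of `α`. -/
abbrev Sh (α : Ordinal.{w}) (C : Type u) [Category.{v} C] :=
  ObjectProperty.FullSubcategory (fun X : (Stage α)ᵒᵖ ⥤ C => SheafCond X)

/-- The underlying presheaf morphism of a morphism of sheaves. -/
def shHom {α : Ordinal.{w}} {A B : Sh α C} (f : A ⟶ B) : A.obj ⟶ B.obj := f.hom

namespace FSUGI

variable {α : Ordinal.{w}}

theorem succ_le_of_lt {a b : Ordinal.{w}} (h : a < b) : a + 1 ≤ b := by
  rw [Ordinal.add_one_eq_succ]; exact Order.succ_le_iff.mpr h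

theorem lt_succ_self (a : Ordinal.{w}) : a < a + 1 := by
  rw [Ordinal.add_one_eq_succ]; exact Order.lt_succ a

theorem le_of_lt_succ {a b : Ordinal.{w}} (h : a < b + 1) : a ≤ b := by
  rw [Ordinal.add_one_eq_succ] at h; exact Order.lt_succ_iff.mp h

section Build

variable (A B : (Stage α)ᵒᵖ ⥤ C)
variable (Φ : ∀ (γ : Ordinal.{w}) (hb : γ + 1 ≤ α),
    (A.obj (op ⟨γ, le_trans (le_self_add) hb⟩) ⟶
      B.obj (op ⟨γ, le_trans (le_self_add) hb⟩)) →
    (A.obj (op ⟨γ + 1, hb⟩) ⟶ B.obj (op ⟨γ + 1, hb⟩)))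

/-- A coherent partial family of maps up to stage `top`. -/
structure Part (top : Stage α) where
  m : ∀ δ : Stage α, δ ≤ top → (A.obj (op δ) ⟶ B.obj (op δ))
  coh : ∀ (δ δ' : Stage α) (h : δ ≤ δ') (h' : δ' ≤ top),
    m δ' h' ≫ B.map (homOfLE h).op = A.map (homOfLE h).op ≫ m δ (le_trans h h')
  succ : ∀ (γ : Ordinal.{w}) (hb : γ + 1 ≤ α) (h : (⟨γ + 1, hb⟩ : Stage α) ≤ top),
    m ⟨γ + 1, hb⟩ h =
      Φ γ hb (m ⟨γ, le_trans (le_self_add) hb⟩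
        (le_trans (show @LE.le (Stage α) _ ⟨γ, le_trans (le_self_add) hb⟩ ⟨γ + 1, hb⟩ from (le_self_add : γ ≤ γ + 1)) h))

variable {A B Φ}

theorem part_unique (hB : SheafCond B) :
    ∀ (β : Ordinal.{w}) (hβ : β ≤ α) {t1 t2 : Stage α}
    (p1 : Part A B Φ t1) (p2 : Part A B Φ t2)
    (h1 : (⟨β, hβ⟩ : Stage α) ≤ t1) (h2 : (⟨β, hβ⟩ : Stage α) ≤ t2),
    p1.m ⟨β, hβ⟩ h1 = p2.m ⟨β, hβ⟩ h2 := by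
  intro β
  induction β using Ordinal.induction with
  | _ β IH =>
    intro hβ t1 t2 p1 p2 h1 h2
    by_cases hs : ∃ δ : Ordinal.{w}, β = δ + 1
    · obtain ⟨δ, rfl⟩ := hs
      rw [p1.succ δ hβ h1, p2.succ δ hβ h2]
      congr 1
      exact IH δ (lt_succ_self δ) _ p1 p2 _ _
    · refine (hB ⟨β, hβ⟩ hs).some.hom_ext fun j => ?_
      have hj : j.unop.1 ≤ (⟨β, hβ⟩ : Stage α) := j.unop.2.le
      show p1.m ⟨β, hβ⟩ h1 ≫ B.map (homOfLE hj).op =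
        p2.m ⟨β, hβ⟩ h2 ≫ B.map (homOfLE hj).op
      rw [p1.coh j.unop.1 ⟨β, hβ⟩ hj h1, p2.coh j.unop.1 ⟨β, hβ⟩ hj h2]
      congr 1
      exact IH j.unop.1.1 j.unop.2 _ p1 p2 _ _

theorem part_unique' (hB : SheafCond B) {t1 t2 : Stage α}
    (p1 : Part A B Φ t1) (p2 : Part A B Φ t2) (s : Stage α)
    (h1 : s ≤ t1) (h2 : s ≤ t2) : p1.m s h1 = p2.m s h2 := by
  obtain ⟨sv, sp⟩ := s
  exact part_unique hB sv sp p1 p2 h1 h2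

theorem map_comp_le (X : (Stage α)ᵒᵖ ⥤ C) {a b c : Stage α} (h1 : a ≤ b) (h2 : b ≤ c) :
    X.map (homOfLE h2).op ≫ X.map (homOfLE h1).op = X.map (homOfLE (h1.trans h2)).op := by
  rw [← X.map_comp]; exact congrArg X.map (Subsingleton.elim _ _)

variable (A B) in
/-- transport of a hom along an equality of stages -/
def tr {t t' : Stage α} (e : t = t') (x : A.obj (op t') ⟶ B.obj (op t')) :
    A.obj (op t) ⟶ B.obj (op t) :=
  eqToHom (by rw [e]) ≫ x ≫ eqToHom (by rw [e])

@[simp] theorem tr_refl {t : Stage α} (e : t = t) (x : A.obj (op t) ⟶ B.obj (op t)) :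
    tr A B e x = x := by
  simp [tr]

variable (A B Φ) in
/-- compatibility of the successor step with one-step restrictions -/
def StepCompat : Prop :=
  ∀ (δ γ : Ordinal.{w}) (hδ : δ + 1 ≤ α) (hγ : γ + 1 ≤ α) (hle : δ ≤ γ)
    (u : A.obj (op ⟨γ, le_trans (le_self_add) hγ⟩) ⟶
      B.obj (op ⟨γ, le_trans (le_self_add) hγ⟩))
    (v : A.obj (op ⟨δ, le_trans (le_self_add) hδ⟩) ⟶
      B.obj (op ⟨δ, le_trans (le_self_add) hδ⟩)),
    u ≫ B.map (homOfLE (show @LE.le (Stage α) _ ⟨δ, le_trans (le_self_add) hδ⟩ ⟨γ, le_trans (le_self_add) hγ⟩ from hle)).op =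
      A.map (homOfLE (show @LE.le (Stage α) _ ⟨δ, le_trans (le_self_add) hδ⟩ ⟨γ, le_trans (le_self_add) hγ⟩ from hle)).op ≫ v →
    Φ γ hγ u ≫ B.map (homOfLE (show @LE.le (Stage α) _ ⟨δ + 1, hδ⟩ ⟨γ + 1, hγ⟩ from
        add_le_add_left hle 1)).op =
      A.map (homOfLE (show @LE.le (Stage α) _ ⟨δ + 1, hδ⟩ ⟨γ + 1, hγ⟩ from
        add_le_add_left hle 1)).op ≫ Φ δ hδ v

theorem part_exists (hB : SheafCond B)
    (hΦ : StepCompat A B Φ) :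
    ∀ (β : Ordinal.{w}) (hβ : β ≤ α), Nonempty (Part A B Φ ⟨β, hβ⟩) := by
  intro β
  induction β using Ordinal.induction with
  | _ β IH =>
    intro hβ
    by_cases hs : ∃ δ : Ordinal.{w}, β = δ + 1
    · -- successor stage
      obtain ⟨δ0, rfl⟩ := hs
      have hδ0α : δ0 ≤ α := le_trans (le_self_add) hβ
      obtain ⟨p⟩ := IH δ0 (lt_succ_self δ0) hδ0α
      -- the new top value
      set X : A.obj (op ⟨δ0 + 1, hβ⟩) ⟶ B.obj (op ⟨δ0 + 1, hβ⟩) :=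
        Φ δ0 hβ (p.m ⟨δ0, hδ0α⟩ le_rfl) with hX
      have key : ∀ (ε : Ordinal.{w}) (hε1 : ε + 1 ≤ α) (hle : ε + 1 ≤ δ0)
          (hl2 : @LE.le (Stage α) _ ⟨ε + 1, hε1⟩ ⟨δ0 + 1, hβ⟩),
          X ≫ B.map (homOfLE hl2).op =
            A.map (homOfLE hl2).op ≫ p.m ⟨ε + 1, hε1⟩ hle := by
        intro ε hε1 hle hl2
        rw [p.succ ε hε1 hle]
        have hεδ0 : ε ≤ δ0 := le_trans ((le_self_add : ε ≤ ε + 1)) hle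
        exact hΦ ε δ0 hε1 hβ hεδ0 _ _
          (p.coh ⟨ε, le_trans (le_self_add) hε1⟩ ⟨δ0, hδ0α⟩ hεδ0 le_rfl)
      have key2 : ∀ (t : Stage α) (ht : t.1 ≤ δ0) (hl2 : t ≤ (⟨δ0 + 1, hβ⟩ : Stage α)),
          X ≫ B.map (homOfLE hl2).op = A.map (homOfLE hl2).op ≫ p.m t ht := by
        intro t ht hl2
        by_cases hds : ∃ ε : Ordinal.{w}, t.1 = ε + 1
        · obtain ⟨ε, he⟩ := hds
          have hε1 : ε + 1 ≤ α := he ▸ t.2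
          have e2 : t = ⟨ε + 1, hε1⟩ := Subtype.ext he
          subst e2
          exact key ε hε1 ht hl2
        · refine (hB t hds).some.hom_ext fun j => ?_
          have hj : j.unop.1 ≤ t := j.unop.2.le
          show (X ≫ B.map (homOfLE hl2).op) ≫ B.map (homOfLE hj).op =
            (A.map (homOfLE hl2).op ≫ p.m t ht) ≫ B.map (homOfLE hj).op
          have hjs : j.unop.1.1 + 1 ≤ δ0 := le_trans (succ_le_of_lt j.unop.2) ht
          have hjα : j.unop.1.1 + 1 ≤ α := le_trans hjs hδ0α
          have hj1 : j.unop.1 ≤ (⟨j.unop.1.1 + 1, hjα⟩ : Stage α) :=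
            (le_self_add : j.unop.1.1 ≤ j.unop.1.1 + 1)
          have hjs' : @LE.le (Stage α) _ ⟨j.unop.1.1 + 1, hjα⟩ ⟨δ0, hδ0α⟩ := hjs
          have hj2 : @LE.le (Stage α) _ ⟨j.unop.1.1 + 1, hjα⟩ ⟨δ0 + 1, hβ⟩ :=
            le_trans hjs' (show @LE.le (Stage α) _ ⟨δ0, hδ0α⟩ ⟨δ0 + 1, hβ⟩ from
              (le_self_add : δ0 ≤ δ0 + 1))
          calc (X ≫ B.map (homOfLE hl2).op) ≫ B.map (homOfLE hj).op
              = X ≫ B.map (homOfLE hj2).op ≫ B.map (homOfLE hj1).op := by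
                erw [Category.assoc, map_comp_le, map_comp_le]
            _ = (A.map (homOfLE hj2).op ≫ p.m ⟨j.unop.1.1 + 1, hjα⟩ hjs) ≫
                  B.map (homOfLE hj1).op := by
                rw [← Category.assoc, key _ hjα hjs hj2]
            _ = A.map (homOfLE hj2).op ≫ A.map (homOfLE hj1).op ≫
                  p.m j.unop.1 (le_trans hj1 hjs) := by
                rw [Category.assoc, p.coh j.unop.1 _ hj1 hjs]
            _ = (A.map (homOfLE hl2).op ≫ A.map (homOfLE hj).op) ≫
                  p.m j.unop.1 (le_trans hj1 hjs) := by
                erw [map_comp_le, ← Category.assoc, map_comp_le]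
            _ = (A.map (homOfLE hl2).op ≫ p.m t ht) ≫ B.map (homOfLE hj).op := by
                rw [Category.assoc, Category.assoc, p.coh j.unop.1 t hj ht]
      refine ⟨⟨fun t ht => if h' : t.1 < δ0 + 1 then p.m t (le_of_lt_succ h')
        else tr A B (Subtype.ext (le_antisymm ht (not_lt.mp h'))) X, ?_, ?_⟩⟩
      · -- coherence
        intro t t' h h'
        by_cases hd' : t'.1 < δ0 + 1
        · have hd : t.1 < δ0 + 1 := lt_of_le_of_lt h hd'
          simp only [dif_pos hd', dif_pos hd]
          exact p.coh t t' h _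
        · have e' : t' = (⟨δ0 + 1, hβ⟩ : Stage α) :=
            Subtype.ext (le_antisymm h' (not_lt.mp hd'))
          subst e'
          simp only [dif_neg hd', tr, eqToHom_refl, Category.id_comp, Category.comp_id]
          by_cases hd : t.1 < δ0 + 1
          · simp only [dif_pos hd]
            exact key2 t (le_of_lt_succ hd) h
          · have e : t = (⟨δ0 + 1, hβ⟩ : Stage α) :=
              Subtype.ext (le_antisymm (le_trans h h') (not_lt.mp hd))
            subst e
            simp only [dif_neg hd, tr, eqToHom_refl, Category.id_comp, Category.comp_id]
            have : homOfLE h = 𝟙 (⟨δ0 + 1, hβ⟩ : Stage α) := Subsingleton.elim _ _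
            erw [this, op_id, A.map_id, B.map_id, Category.comp_id, Category.id_comp]
      · -- successor equation
        intro γ hb h
        by_cases hlt : γ + 1 < δ0 + 1
        · have hγlt : γ < δ0 + 1 := lt_trans (lt_succ_self γ) hlt
          simp only [dif_pos hlt, dif_pos hγlt]
          exact p.succ γ hb _
        · have hγeq : γ = δ0 := by
            have h1 : γ + 1 = δ0 + 1 := le_antisymm h (not_lt.mp hlt)
            rwa [Ordinal.add_one_eq_succ, Ordinal.add_one_eq_succ,
              Order.succ_eq_succ_iff] at h1
          subst hγeq
          simp only [dif_neg hlt, tr, eqToHom_refl, Category.id_comp, Category.comp_id, dif_pos (lt_succ_self γ)]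
          exact hX
    · -- zero or limit stage
      set γ : Stage α := ⟨β, hβ⟩ with hγ
      have q : ∀ t : Stage α, t < γ → Part A B Φ t := fun t ht => (IH t.1 ht t.2).some
      -- the cone over the stages below γ
      set K : Cone ((stageIncl γ).op ⋙ B) :=
        { pt := A.obj (op γ)
          π :=
            { app := fun j => A.map (homOfLE j.unop.2.le).op ≫
                (q j.unop.1 j.unop.2).m j.unop.1 le_rfl
              naturality := fun j j' f => by
                dsimp
                rw [Category.id_comp]
                have hle : j'.unop.1 ≤ j.unop.1 := leOfHom f.unop
                have e : (stageIncl γ).map f.unop = homOfLE hle := Subsingleton.elim _ _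
                erw [e, Category.assoc,
                  (q j.unop.1 j.unop.2).coh j'.unop.1 j.unop.1 hle le_rfl,
                  ← Category.assoc, map_comp_le, part_unique' hB
                    (q j.unop.1 j.unop.2) (q j'.unop.1 j'.unop.2) j'.unop.1 _ le_rfl] } } with hK
      set mγ : A.obj (op γ) ⟶ B.obj (op γ) := (hB γ hs).some.lift K with hmγ
      have fac : ∀ (t : Stage α) (ht : t < γ),
          mγ ≫ B.map (homOfLE ht.le).op =
            A.map (homOfLE ht.le).op ≫ (q t ht).m t le_rfl := by
        intro t ht
        exact (hB γ hs).some.fac K (op ⟨t, ht⟩)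
      refine ⟨⟨fun t ht => if h' : t.1 < β then (q t h').m t le_rfl
        else tr A B (Subtype.ext (le_antisymm ht (not_lt.mp h'))) mγ, ?_, ?_⟩⟩
      · intro t t' h h'
        by_cases hd' : t'.1 < β
        · have hd : t.1 < β := lt_of_le_of_lt h hd'
          simp only [dif_pos hd', dif_pos hd]
          rw [part_unique' hB (q t hd) (q t' hd') t le_rfl h]
          exact (q t' hd').coh t t' h le_rfl
        · have e' : t' = γ := Subtype.ext (le_antisymm h' (not_lt.mp hd'))
          subst e'
          simp only [dif_neg hd', tr, eqToHom_refl, Category.id_comp, Category.comp_id]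
          by_cases hd : t.1 < β
          · simp only [dif_pos hd]
            exact fac t hd
          · have e : t = γ := Subtype.ext (le_antisymm (le_trans h h') (not_lt.mp hd))
            subst e
            simp only [dif_neg hd, tr, eqToHom_refl, Category.id_comp, Category.comp_id]
            have : homOfLE h = 𝟙 γ := Subsingleton.elim _ _
            erw [this, op_id, A.map_id, B.map_id, Category.comp_id, Category.id_comp]
      · intro γ' hb h
        have hlt : γ' + 1 < β := lt_of_le_of_ne h (fun e => hs ⟨γ', e.symm⟩)
        have hγ'lt : γ' < β := lt_trans (lt_succ_self γ') hlt
        simp only [dif_pos hlt, dif_pos hγ'lt]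
        rw [(q ⟨γ' + 1, hb⟩ hlt).succ γ' hb le_rfl,
          part_unique' hB (q ⟨γ' + 1, hb⟩ hlt)
            (q ⟨γ', le_trans (le_self_add) hb⟩ hγ'lt) _ _ le_rfl]

/-- the stagewise uniqueness principle for natural transformations into a sheaf -/
theorem nat_ext (hB : SheafCond B) (u v : A ⟶ B)
    (hstep : ∀ (γ : Ordinal.{w}) (hb : γ + 1 ≤ α),
      u.app (op ⟨γ, le_trans (le_self_add) hb⟩) =
        v.app (op ⟨γ, le_trans (le_self_add) hb⟩) →
      u.app (op ⟨γ + 1, hb⟩) = v.app (op ⟨γ + 1, hb⟩)) : u = v := by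
  have main : ∀ (β : Ordinal.{w}) (hβ : β ≤ α),
      u.app (op ⟨β, hβ⟩) = v.app (op ⟨β, hβ⟩) := by
    intro β
    induction β using Ordinal.induction with
    | _ β IH =>
      intro hβ
      by_cases hs : ∃ δ : Ordinal.{w}, β = δ + 1
      · obtain ⟨δ, rfl⟩ := hs
        exact hstep δ hβ (IH δ (lt_succ_self δ) _)
      · refine (hB ⟨β, hβ⟩ hs).some.hom_ext fun j => ?_
        have hj : j.unop.1 ≤ (⟨β, hβ⟩ : Stage α) := j.unop.2.le
        show u.app (op ⟨β, hβ⟩) ≫ B.map (homOfLE hj).op =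
          v.app (op ⟨β, hβ⟩) ≫ B.map (homOfLE hj).op
        rw [← u.naturality, ← v.naturality]
        have : j.unop.1 = (⟨j.unop.1.1, j.unop.1.2⟩ : Stage α) := rfl
        rw [show u.app (op j.unop.1) = v.app (op j.unop.1) from
          IH j.unop.1.1 j.unop.2 j.unop.1.2]
  ext t
  have : t = op (⟨t.unop.1, t.unop.2⟩ : Stage α) := rfl
  rw [this]
  exact main t.unop.1 t.unop.2

variable (A B Φ) in
noncomputable def buildNat (hB : SheafCond B)
    (hΦ : StepCompat A B Φ) : A ⟶ B where
  app t := ((part_exists hB hΦ α le_rfl).some).m t.unop t.unop.2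
  naturality := by
    intro t t' f
    have hle : t'.unop ≤ t.unop := leOfHom f.unop
    have e : f = (homOfLE hle).op := Subsingleton.elim _ _
    rw [e]
    exact ((part_exists hB hΦ α le_rfl).some.coh t'.unop t.unop hle t.unop.2).symm

theorem buildNat_succ (hB : SheafCond B) (hΦ : StepCompat A B Φ) (γ : Ordinal.{w}) (hb : γ + 1 ≤ α) :
    (buildNat A B Φ hB hΦ).app (op ⟨γ + 1, hb⟩) =
      Φ γ hb ((buildNat A B Φ hB hΦ).app
        (op ⟨γ, le_trans (le_self_add) hb⟩)) :=
  ((part_exists hB hΦ α le_rfl).some).succ γ hb hb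

theorem isIso_components (hA : SheafCond A) (hB : SheafCond B) (u : A ⟶ B)
    (hsucc : ∀ (γ : Ordinal.{w}) (hb : γ + 1 ≤ α), IsIso (u.app (op ⟨γ + 1, hb⟩))) :
    ∀ t : (Stage α)ᵒᵖ, IsIso (u.app t) := by
  have main : ∀ (β : Ordinal.{w}) (hβ : β ≤ α), IsIso (u.app (op ⟨β, hβ⟩)) := by
    intro β
    induction β using Ordinal.induction with
    | _ β IH =>
      intro hβ
      by_cases hs : ∃ δ : Ordinal.{w}, β = δ + 1
      · obtain ⟨δ, rfl⟩ := hs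
        exact hsucc δ hβ
      · set γ : Stage α := ⟨β, hβ⟩ with hγdef
        have L1 := (hA γ hs).some
        have L2 := (hB γ hs).some
        have wnat : ∀ {j j' : ({t : Stage α // t < γ})ᵒᵖ} (f : j ⟶ j'),
            ((stageIncl γ).op ⋙ A).map f ≫ u.app (op j'.unop.1) =
              u.app (op j.unop.1) ≫ ((stageIncl γ).op ⋙ B).map f := by
          intro j j' f
          exact u.naturality ((stageIncl γ).map f.unop).op
        haveI hIH : ∀ j : ({t : Stage α // t < γ})ᵒᵖ, IsIso (u.app (op j.unop.1)) :=
          fun j => IH j.unop.1.1 j.unop.2 j.unop.1.2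
        set w : (stageIncl γ).op ⋙ A ≅ (stageIncl γ).op ⋙ B :=
          NatIso.ofComponents (fun j => @asIso _ _ _ _ (u.app (op j.unop.1)) (hIH j)) wnat with hw
        have : u.app (op γ) = (L1.conePointsIsoOfNatIso L2 w).hom := by
          refine L2.hom_ext fun j => ?_
          erw [IsLimit.conePointsIsoOfNatIso_hom_comp]
          have hj : j.unop.1 ≤ γ := j.unop.2.le
          show u.app (op γ) ≫ B.map (homOfLE hj).op =
            A.map (homOfLE hj).op ≫ w.hom.app j
          have : w.hom.app j = u.app (op j.unop.1) := rfl
          rw [this]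
          exact (u.naturality (homOfLE hj).op).symm
        rw [this]
        exact Iso.isIso_hom _
  intro t
  have e : t = op (⟨t.unop.1, t.unop.2⟩ : Stage α) := rfl
  rw [e]
  exact main t.unop.1 t.unop.2

end Build

end FSUGI

/-- Let `α` be a limit ordinal and `C` a category with limits of `β`-sequences for
`β ≤ α`.  Let `S` be the final-sequence sheaf of an endofunctor `F` (with
`S_{γ+1} = F(S_γ)` and the canonical connecting maps) and let `G = F^ ∘ ▶` be the
guarded pointwise extension of `F` (with `(G X)_{γ+1} = F(X_γ)`, acting accordingly
on restrictions and morphisms).  Then the identity on `S` is a `G`-coalgebra — there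
is an isomorphism `c : S ⟶ G S` whose components at successor stages are identities
(modulo the canonical identifications) — and it is the unique `G`-invariant up to
isomorphism: it is a final `G`-coalgebra, the corresponding algebra is an initial
`G`-algebra, and every `G`-invariant is isomorphic to `S`. -/
theorem final_sequence_unique_guarded_invariant
    (α : Ordinal.{w}) (hα : Order.IsSuccLimit α)
    (hlim : ∀ β : Ordinal.{w}, β ≤ α →
      HasLimitsOfShape ((Set.Iio β : Set Ordinal.{w}))ᵒᵖ C)
    (F : C ⥤ C)
    -- the guarded pointwise extension `G = F^ ∘ ▶`
    (G : Sh α C ⥤ Sh α C)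
    (hG_obj : ∀ (X : Sh α C) (γ : Ordinal.{w}) (hb : γ + 1 ≤ α),
      (G.obj X).obj.obj (op ⟨γ + 1, hb⟩) =
        F.obj (X.obj.obj (op ⟨γ, le_trans le_self_add hb⟩)))
    (hG_res : ∀ (X : Sh α C) (γ γ' : Ordinal.{w}) (hb : γ + 1 ≤ α)
      (hb' : γ' + 1 ≤ α) (h : γ ≤ γ'),
      HEq ((G.obj X).obj.map
          (homOfLE (show (⟨γ + 1, hb⟩ : Stage α) ≤ ⟨γ' + 1, hb'⟩ by simpa using h)).op)
        (F.map (X.obj.map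
          (homOfLE (show (⟨γ, le_trans le_self_add hb⟩ : Stage α) ≤
            ⟨γ', le_trans le_self_add hb'⟩ from h)).op)))
    (hG_map : ∀ {X Y : Sh α C} (g : X ⟶ Y) (γ : Ordinal.{w}) (hb : γ + 1 ≤ α),
      HEq ((shHom (G.map g)).app (op ⟨γ + 1, hb⟩))
        (F.map ((shHom g).app (op ⟨γ, le_trans le_self_add hb⟩))))
    -- the final-sequence sheaf of `F`
    (S : Sh α C)
    (hS_obj : ∀ (γ : Ordinal.{w}) (hb : γ + 1 ≤ α),
      S.obj.obj (op ⟨γ + 1, hb⟩) =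
        F.obj (S.obj.obj (op ⟨γ, le_trans le_self_add hb⟩)))
    (hS_res : ∀ (γ γ' : Ordinal.{w}) (hb : γ + 1 ≤ α) (hb' : γ' + 1 ≤ α)
      (h : γ ≤ γ'),
      HEq (S.obj.map
          (homOfLE (show (⟨γ + 1, hb⟩ : Stage α) ≤ ⟨γ' + 1, hb'⟩ by simpa using h)).op)
        (F.map (S.obj.map
          (homOfLE (show (⟨γ, le_trans le_self_add hb⟩ : Stage α) ≤
            ⟨γ', le_trans le_self_add hb'⟩ from h)).op))) :
    ∃ c : S ⟶ G.obj S,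
      (∀ (γ : Ordinal.{w}) (hb : γ + 1 ≤ α),
        HEq ((shHom c).app (op ⟨γ + 1, hb⟩))
          (𝟙 (F.obj (S.obj.obj (op ⟨γ, le_trans le_self_add hb⟩))))) ∧
      IsIso c ∧
      Nonempty (IsTerminal (⟨S, c⟩ : Endofunctor.Coalgebra G)) ∧
      (∀ (h : IsIso c), Nonempty (IsInitial
        (⟨S, CategoryTheory.inv c⟩ : Endofunctor.Algebra G))) ∧
      (∀ (A : Sh α C), (A ≅ G.obj A) → Nonempty (A ≅ S)) := by
  classical
  have hSsh : SheafCond S.obj := S.property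
  have hGSsh : SheafCond (G.obj S).obj := (G.obj S).property
  -- restriction maps at successor stages, as equations
  have hSres : ∀ (δ γ : Ordinal.{w}) (hδ : δ + 1 ≤ α) (hγ : γ + 1 ≤ α) (hle : δ ≤ γ),
      S.obj.map (homOfLE (show @LE.le (Stage α) _ ⟨δ + 1, hδ⟩ ⟨γ + 1, hγ⟩ from
        add_le_add_left hle 1)).op =
      eqToHom (hS_obj γ hγ) ≫
        F.map (S.obj.map (homOfLE (show @LE.le (Stage α) _ ⟨δ, le_trans (le_self_add) hδ⟩ ⟨γ, le_trans (le_self_add) hγ⟩ from hle)).op) ≫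
        eqToHom (hS_obj δ hδ).symm :=
    fun δ γ hδ hγ hle =>
      (conj_eqToHom_iff_heq _ _ (hS_obj γ hγ) (hS_obj δ hδ)).mpr (hS_res δ γ hδ hγ hle)
  have hGres : ∀ (X : Sh α C) (δ γ : Ordinal.{w}) (hδ : δ + 1 ≤ α) (hγ : γ + 1 ≤ α)
      (hle : δ ≤ γ),
      (G.obj X).obj.map (homOfLE (show @LE.le (Stage α) _ ⟨δ + 1, hδ⟩ ⟨γ + 1, hγ⟩ from
        add_le_add_left hle 1)).op =
      eqToHom (hG_obj X γ hγ) ≫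
        F.map (X.obj.map (homOfLE (show @LE.le (Stage α) _ ⟨δ, le_trans (le_self_add) hδ⟩ ⟨γ, le_trans (le_self_add) hγ⟩ from hle)).op) ≫
        eqToHom (hG_obj X δ hδ).symm :=
    fun X δ γ hδ hγ hle =>
      (conj_eqToHom_iff_heq _ _ (hG_obj X γ hγ) (hG_obj X δ hδ)).mpr (hG_res X δ γ hδ hγ hle)
  have hGmapEq : ∀ {X Y : Sh α C} (g : X ⟶ Y) (γ : Ordinal.{w}) (hb : γ + 1 ≤ α),
      (shHom (G.map g)).app (op ⟨γ + 1, hb⟩) =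
      eqToHom (hG_obj X γ hb) ≫
        F.map ((shHom g).app (op ⟨γ, le_trans (le_self_add) hb⟩)) ≫
        eqToHom (hG_obj Y γ hb).symm :=
    fun g γ hb =>
      (conj_eqToHom_iff_heq _ _ (hG_obj _ γ hb) (hG_obj _ γ hb)).mpr (hG_map g γ hb)
  -- the coalgebra structure map
  have hΦc : FSUGI.StepCompat S.obj (G.obj S).obj
      (fun γ hb _ => eqToHom (hS_obj γ hb) ≫ eqToHom ((hG_obj S γ hb).symm)) := by
    intro δ γ hδ hγ hle u v hp
    erw [hGres S δ γ hδ hγ hle, hSres δ γ hδ hγ hle]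
    simp
  set c0 : S.obj ⟶ (G.obj S).obj :=
    FSUGI.buildNat S.obj (G.obj S).obj _ hGSsh hΦc with hc0
  have hc_succ : ∀ (γ : Ordinal.{w}) (hb : γ + 1 ≤ α),
      c0.app (op ⟨γ + 1, hb⟩) = eqToHom (hS_obj γ hb) ≫ eqToHom ((hG_obj S γ hb).symm) :=
    fun γ hb => FSUGI.buildNat_succ hGSsh hΦc γ hb
  haveI hIsoApp : ∀ t, IsIso (c0.app t) :=
    FSUGI.isIso_components hSsh hGSsh c0 (fun γ hb => by rw [hc_succ]; infer_instance)
  haveI : IsIso c0 := NatIso.isIso_of_isIso_app c0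
  set c : S ⟶ G.obj S := ObjectProperty.homMk c0 with hcdef
  haveI hIsoC : IsIso c := by
    haveI : IsIso c.hom := ‹IsIso c0›
    exact (ObjectProperty.isIso_hom_iff c).mp this
  have hcHEq : ∀ (γ : Ordinal.{w}) (hb : γ + 1 ≤ α),
      HEq ((shHom c).app (op ⟨γ + 1, hb⟩))
        (𝟙 (F.obj (S.obj.obj (op ⟨γ, le_trans (le_self_add) hb⟩)))) :=
    fun γ hb => (conj_eqToHom_iff_heq _ _ (hS_obj γ hb) (hG_obj S γ hb)).mp
      (by rw [show (shHom c).app (op ⟨γ + 1, hb⟩) = c0.app (op ⟨γ + 1, hb⟩) from rfl,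
            hc_succ]; simp)
  -- terminal coalgebra
  have hTermAux : ∀ W : Endofunctor.Coalgebra G,
      ∃ f : W ⟶ (⟨S, c⟩ : Endofunctor.Coalgebra G),
        ∀ g : W ⟶ (⟨S, c⟩ : Endofunctor.Coalgebra G), g = f := by
    rintro ⟨A', a⟩
    have hA'sh : SheafCond A'.obj := A'.property
    have a0 : A'.obj ⟶ (G.obj A').obj := shHom a
    have hΦf : FSUGI.StepCompat A'.obj S.obj
        (fun γ hb u => (shHom a).app (op ⟨γ + 1, hb⟩) ≫ eqToHom (hG_obj A' γ hb) ≫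
          F.map u ≫ eqToHom (hS_obj γ hb).symm) := by
      intro δ γ hδ hγ hle u v hp
      dsimp only
      erw [hSres δ γ hδ hγ hle, NatTrans.naturality_assoc (shHom a),
        hGres A' δ γ hδ hγ hle]
      simp only [Category.assoc, eqToHom_trans, eqToHom_refl, Category.comp_id,
        Category.id_comp, eqToHom_trans_assoc]
      rw [← Functor.map_comp_assoc, ← Functor.map_comp_assoc, hp]
    set f0 : A'.obj ⟶ S.obj := FSUGI.buildNat A'.obj S.obj _ hSsh hΦf with hf0
    have hf_succ : ∀ (γ : Ordinal.{w}) (hb : γ + 1 ≤ α),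
        f0.app (op ⟨γ + 1, hb⟩) = (shHom a).app (op ⟨γ + 1, hb⟩) ≫
          eqToHom (hG_obj A' γ hb) ≫
          F.map (f0.app (op ⟨γ, le_trans (le_self_add) hb⟩)) ≫
          eqToHom (hS_obj γ hb).symm :=
      fun γ hb => FSUGI.buildNat_succ hSsh hΦf γ hb
    have hhom : shHom a ≫ shHom (G.map (ObjectProperty.homMk f0 : A' ⟶ S)) = f0 ≫ c0 := by
      refine FSUGI.nat_ext hGSsh _ _ fun γ hb _ => ?_
      rw [NatTrans.comp_app, NatTrans.comp_app, hGmapEq, hc_succ, hf_succ]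
      simp [shHom]
    refine ⟨⟨ObjectProperty.homMk f0, ObjectProperty.hom_ext _ hhom⟩, ?_⟩
    intro g
    apply Endofunctor.Coalgebra.Hom.ext
    apply ObjectProperty.hom_ext
    show shHom g.f = f0
    refine FSUGI.nat_ext hSsh _ _ fun γ hb hIH => ?_
    have hg : (shHom a ≫ shHom (G.map g.f)).app (op ⟨γ + 1, hb⟩) =
        (shHom g.f ≫ c0).app (op ⟨γ + 1, hb⟩) :=
      congrArg (fun n : A' ⟶ G.obj S => (shHom n).app (op ⟨γ + 1, hb⟩)) g.h
    rw [NatTrans.comp_app, NatTrans.comp_app, hGmapEq, hc_succ] at hg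
    have hg2 := congrArg
      (fun m : A'.obj.obj (op ⟨γ + 1, hb⟩) ⟶ (G.obj S).obj.obj (op ⟨γ + 1, hb⟩) =>
        m ≫ (eqToHom (hG_obj S γ hb) ≫ eqToHom (hS_obj γ hb).symm)) hg
    simp only [Category.assoc, eqToHom_trans, eqToHom_refl, Category.comp_id] at hg2
    rw [hf_succ, ← hIH]
    exact hg2.symm
  have hTerm : IsTerminal (⟨S, c⟩ : Endofunctor.Coalgebra G) :=
    IsTerminal.ofUniqueHom (fun W => (hTermAux W).choose)
      (fun W m => (hTermAux W).choose_spec m)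
  -- initial algebra
  have hInitAux : ∀ V : Endofunctor.Algebra G,
      ∃ g : (⟨S, CategoryTheory.inv c⟩ : Endofunctor.Algebra G) ⟶ V,
        ∀ g' : (⟨S, CategoryTheory.inv c⟩ : Endofunctor.Algebra G) ⟶ V, g' = g := by
    rintro ⟨A', b⟩
    have hA'sh : SheafCond A'.obj := A'.property
    have hΦg : FSUGI.StepCompat S.obj A'.obj
        (fun γ hb u => eqToHom (hS_obj γ hb) ≫ F.map u ≫
          eqToHom (hG_obj A' γ hb).symm ≫ (shHom b).app (op ⟨γ + 1, hb⟩)) := by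
      intro δ γ hδ hγ hle u v hp
      dsimp only
      simp only [Category.assoc]
      erw [hSres δ γ hδ hγ hle, ← NatTrans.naturality (shHom b),
        hGres A' δ γ hδ hγ hle]
      simp only [Category.assoc, eqToHom_trans, eqToHom_refl, Category.comp_id,
        Category.id_comp, eqToHom_trans_assoc]
      rw [← Functor.map_comp_assoc, ← Functor.map_comp_assoc, hp]
    set g0 : S.obj ⟶ A'.obj := FSUGI.buildNat S.obj A'.obj _ hA'sh hΦg with hg0
    have hg_succ : ∀ (γ : Ordinal.{w}) (hb : γ + 1 ≤ α),
        g0.app (op ⟨γ + 1, hb⟩) = eqToHom (hS_obj γ hb) ≫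
          F.map (g0.app (op ⟨γ, le_trans (le_self_add) hb⟩)) ≫
          eqToHom (hG_obj A' γ hb).symm ≫ (shHom b).app (op ⟨γ + 1, hb⟩) :=
      fun γ hb => FSUGI.buildNat_succ hA'sh hΦg γ hb
    have cE : c0 ≫ shHom (G.map (ObjectProperty.homMk g0 : S ⟶ A')) ≫ shHom b = g0 := by
      refine FSUGI.nat_ext hA'sh _ _ fun γ hb _ => ?_
      rw [NatTrans.comp_app, NatTrans.comp_app, hGmapEq, hc_succ, hg_succ]
      simp [shHom]
    have cE' : c ≫ G.map (ObjectProperty.homMk g0 : S ⟶ A') ≫ b = (ObjectProperty.homMk g0 : S ⟶ A') := ObjectProperty.hom_ext _ cE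
    have halg : G.map (ObjectProperty.homMk g0 : S ⟶ A') ≫ b = CategoryTheory.inv c ≫ (ObjectProperty.homMk g0 : S ⟶ A') := by
      conv_rhs => rw [← cE']
      rw [IsIso.inv_hom_id_assoc]
    refine ⟨⟨ObjectProperty.homMk g0, halg⟩, ?_⟩
    intro g'
    apply Endofunctor.Algebra.Hom.ext
    apply ObjectProperty.hom_ext
    show shHom g'.f = g0
    refine FSUGI.nat_ext hA'sh _ _ fun γ hb hIH => ?_
    have hE : c ≫ G.map g'.f ≫ b = g'.f := by
      rw [g'.h, IsIso.hom_inv_id_assoc]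
    have hE2 : (c0 ≫ shHom (G.map g'.f) ≫ shHom b).app (op ⟨γ + 1, hb⟩) =
        (shHom g'.f).app (op ⟨γ + 1, hb⟩) :=
      congrArg (fun n : S ⟶ A' => (shHom n).app (op ⟨γ + 1, hb⟩)) hE
    rw [NatTrans.comp_app, NatTrans.comp_app, hGmapEq, hc_succ] at hE2
    rw [hg_succ, ← hIH, ← hE2]
    simp [shHom]
  have hInit : IsInitial (⟨S, CategoryTheory.inv c⟩ : Endofunctor.Algebra G) :=
    IsInitial.ofUniqueHom (fun V => (hInitAux V).choose)
      (fun V m => (hInitAux V).choose_spec m)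
  -- every invariant is isomorphic to S
  have hA'iso : ∀ (A' : Sh α C), (A' ≅ G.obj A') → Nonempty (A' ≅ S) := by
    intro A' e
    obtain ⟨f, hfU⟩ := hTermAux ⟨A', e.hom⟩
    obtain ⟨g, hgU⟩ := hInitAux ⟨A', e.inv⟩
    have hg1 : g.f ≫ e.hom = c ≫ G.map g.f := by
      have h1 : c ≫ G.map g.f ≫ e.inv = g.f := by
        rw [g.h, IsIso.hom_inv_id_assoc]
      calc g.f ≫ e.hom = (c ≫ G.map g.f ≫ e.inv) ≫ e.hom := by rw [h1]
        _ = c ≫ G.map g.f := by simp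
    have hendo : ∀ h : A' ⟶ A', h ≫ e.hom = e.hom ≫ G.map h → h = 𝟙 A' := by
      intro h hcond
      have key : shHom h = 𝟙 A'.obj := by
        refine FSUGI.nat_ext A'.property _ _ fun γ hb hIH => ?_
        have h1 : (shHom h ≫ shHom e.hom).app (op ⟨γ + 1, hb⟩) =
            (shHom e.hom ≫ shHom (G.map h)).app (op ⟨γ + 1, hb⟩) :=
          congrArg (fun n : A' ⟶ G.obj A' => (shHom n).app (op ⟨γ + 1, hb⟩)) hcond
        rw [NatTrans.comp_app, NatTrans.comp_app, hGmapEq] at h1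
        rw [hIH] at h1
        simp only [NatTrans.id_app] at h1
        rw [CategoryTheory.Functor.map_id] at h1
        simp only [Category.id_comp, eqToHom_trans, eqToHom_refl,
          Category.comp_id, Category.assoc] at h1
        have h3 : (shHom e.hom).app (op ⟨γ + 1, hb⟩) ≫
            (shHom e.inv).app (op ⟨γ + 1, hb⟩) = 𝟙 _ := by
          have h4 : shHom e.hom ≫ shHom e.inv = 𝟙 A'.obj := congrArg shHom e.hom_inv_id
          have h5 := congrArg (fun n : A'.obj ⟶ A'.obj =>
            n.app (op ⟨γ + 1, hb⟩)) h4
          simpa using h5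
        have h2 := congrArg (fun m => m ≫ (shHom e.inv).app (op ⟨γ + 1, hb⟩)) h1
        rw [Category.assoc, h3, Category.comp_id] at h2
        simp only [NatTrans.id_app]
        exact h2
      exact ObjectProperty.hom_ext _ key
    have hfg : f.f ≫ g.f = 𝟙 A' := by
      apply hendo
      rw [Category.assoc, hg1, ← Category.assoc, ← f.h, Category.assoc, ← G.map_comp]
    have hgf : g.f ≫ f.f = 𝟙 S := by
      obtain ⟨idm, hidU⟩ := hTermAux ⟨S, c⟩
      have hcomp : (⟨S, c⟩ : Endofunctor.Coalgebra G).str ≫ G.map (g.f ≫ f.f) =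
          (g.f ≫ f.f) ≫ (⟨S, c⟩ : Endofunctor.Coalgebra G).str := by
        show c ≫ G.map (g.f ≫ f.f) = (g.f ≫ f.f) ≫ c
        calc c ≫ G.map (g.f ≫ f.f) = (g.f ≫ e.hom) ≫ G.map f.f := by
              rw [G.map_comp, ← Category.assoc, ← hg1]
          _ = g.f ≫ (f.f ≫ c) := by rw [Category.assoc, f.h]
          _ = (g.f ≫ f.f) ≫ c := by rw [Category.assoc]
      have e1 : (⟨g.f ≫ f.f, hcomp⟩ :
          (⟨S, c⟩ : Endofunctor.Coalgebra G) ⟶ ⟨S, c⟩) = idm := hidU _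
      have e2 : (𝟙 (⟨S, c⟩ : Endofunctor.Coalgebra G)) = idm := hidU _
      exact congrArg Endofunctor.Coalgebra.Hom.f (e1.trans e2.symm)
    exact ⟨⟨f.f, g.f, hfg, hgf⟩⟩
  exact ⟨c, hcHEq, hIsoC, ⟨hTerm⟩, fun _ => ⟨hInit⟩, hA'iso⟩
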